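/- Let h(z,z̄) = e^{λ(z,z̄)} with λ(z,z̄) = c₁(z+z̄) + c₂(z²+z̄²) + c₃(z³+z̄³) + c₄|z|⁴, where c₁,c₂,c₃,c₄ are real constants satisfying c₁ + 2c₂ + 3c₃ + 2c₄ = 1. Then both z=0 and z=1 are intrinsic vanishing points, i.e. (∂_z log h)(∂_z∂_z̄ log h) − ∂_z∂_z̄∂_z log h vanishes at z=0 and at z=1. Moreover, the sectional curvature quantity ∂_z∂_z̄ log h vanishes at z=0, and is nonzero at z=1 if c₄ ≠ 0. -/
import Mathlib


open Complex ComplexConjugate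

/-- Wirtinger derivative `∂_z = ½(∂_x − i∂_y)`. -/
noncomputable def wdz (f : ℂ → ℂ) (z : ℂ) : ℂ :=
  (1/2) * (fderiv ℝ f z 1 - Complex.I * fderiv ℝ f z Complex.I)

/-- Wirtinger derivative `∂_z̄ = ½(∂_x + i∂_y)`. -/
noncomputable def wdzbar (f : ℂ → ℂ) (z : ℂ) : ℂ :=
  (1/2) * (fderiv ℝ f z 1 + Complex.I * fderiv ℝ f z Complex.I)

/-- `(∂_z log h)(∂_z∂_z̄ log h) − ∂_z∂_z̄∂_z log h`, in terms of `L = log h`. -/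
noncomputable def ivExpr (L : ℂ → ℂ) (z : ℂ) : ℂ :=
  wdz L z * wdzbar (wdz L) z - wdz (wdzbar (wdz L)) z

/-- For `h = e^λ` with `λ = c₁(z+z̄)+c₂(z²+z̄²)+c₃(z³+z̄³)+c₄|z|⁴` and
`c₁+2c₂+3c₃+2c₄ = 1`, both `z=0` and `z=1` are intrinsic vanishing points;
moreover `∂_z∂_z̄ log h` vanishes at `0` and (if `c₄ ≠ 0`) is nonzero at `1`. -/
noncomputable def conjL : ℂ →L[ℝ] ℂ := Complex.conjCLE.toContinuousLinearMap

lemma hasF_conj (z : ℂ) : HasFDerivAt (fun w : ℂ => (conj w : ℂ)) conjL z :=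
  conjL.hasFDerivAt

lemma conjL_apply (w : ℂ) : conjL w = conj w := rfl

theorem stmt4 (c₁ c₂ c₃ c₄ : ℝ) (hc : c₁ + 2*c₂ + 3*c₃ + 2*c₄ = 1)
    (lam : ℂ → ℂ)
    (hlam : lam = fun z => (c₁:ℂ) * (z + conj z) + (c₂:ℂ) * (z^2 + (conj z)^2)
      + (c₃:ℂ) * (z^3 + (conj z)^3) + (c₄:ℂ) * ((Complex.normSq z : ℂ))^2) :
    ivExpr lam 0 = 0 ∧ ivExpr lam 1 = 0 ∧
    wdzbar (wdz lam) 0 = 0 ∧ (c₄ ≠ 0 → wdzbar (wdz lam) 1 ≠ 0) := by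
  have hlam' : lam = fun w : ℂ => (c₁:ℂ)*w + (c₁:ℂ)*conj w + (c₂:ℂ)*(w*w)
      + (c₂:ℂ)*(conj w*conj w) + (c₃:ℂ)*(w*(w*w)) + (c₃:ℂ)*(conj w*(conj w*conj w))
      + (c₄:ℂ)*((w*conj w)*(w*conj w)) := by
    rw [hlam]; funext w
    rw [← Complex.mul_conj]; ring
  -- first Wirtinger derivative
  have hA : wdz lam = fun z : ℂ => (c₁:ℂ) + 2*c₂*z + 3*c₃*(z*z) + 2*c₄*(z*(conj z*conj z)) := by
    funext z
    have h : HasFDerivAt (fun w : ℂ => (c₁:ℂ)*w + (c₁:ℂ)*conj w + (c₂:ℂ)*(w*w)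
        + (c₂:ℂ)*(conj w*conj w) + (c₃:ℂ)*(w*(w*w)) + (c₃:ℂ)*(conj w*(conj w*conj w))
        + (c₄:ℂ)*((w*conj w)*(w*conj w))) _ z :=
      ((((((((hasFDerivAt_id z).const_mul (c₁:ℂ)).add
        ((hasF_conj z).const_mul (c₁:ℂ))).add
        (((hasFDerivAt_id z).mul' (hasFDerivAt_id z)).const_mul (c₂:ℂ))).add
        (((hasF_conj z).mul' (hasF_conj z)).const_mul (c₂:ℂ))).add
        (((hasFDerivAt_id z).mul' ((hasFDerivAt_id z).mul' (hasFDerivAt_id z))).const_mul (c₃:ℂ))).add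
        (((hasF_conj z).mul' ((hasF_conj z).mul' (hasF_conj z))).const_mul (c₃:ℂ))).add
        ((((hasFDerivAt_id z).mul' (hasF_conj z)).mul'
          ((hasFDerivAt_id z).mul' (hasF_conj z))).const_mul (c₄:ℂ)))
    rw [wdz, hlam', h.fderiv]
    simp [conjL_apply, Complex.conj_I, smul_eq_mul]
    ring_nf
    simp [Complex.I_sq]
    ring
  -- second: ∂_z̄ of the above
  have hB : wdzbar (wdz lam) = fun z : ℂ => 4*c₄*(z*conj z) := by
    rw [hA]; funext z
    have h : HasFDerivAt (fun z : ℂ => (c₁:ℂ) + 2*c₂*z + 3*c₃*(z*z) + 2*c₄*(z*(conj z*conj z))) _ z :=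
      ((((hasFDerivAt_const (c₁:ℂ) z).add
        ((hasFDerivAt_id z).const_mul (2*c₂:ℂ))).add
        (((hasFDerivAt_id z).mul' (hasFDerivAt_id z)).const_mul (3*c₃:ℂ))).add
        (((hasFDerivAt_id z).mul' ((hasF_conj z).mul' (hasF_conj z))).const_mul (2*c₄:ℂ)))
    rw [wdzbar, h.fderiv]
    simp [conjL_apply, Complex.conj_I, smul_eq_mul]
    ring_nf
    simp [Complex.I_sq]
    ring
  -- third: ∂_z of that
  have hC : ∀ z : ℂ, wdz (wdzbar (wdz lam)) z = 4*c₄*conj z := by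
    intro z
    rw [hB]
    have h : HasFDerivAt (fun z : ℂ => 4*(c₄:ℂ)*(z*conj z)) _ z :=
      ((hasFDerivAt_id z).mul' (hasF_conj z)).const_mul (4*c₄:ℂ)
    rw [wdz, h.fderiv]
    simp [conjL_apply, Complex.conj_I, smul_eq_mul]
    ring_nf
    simp [Complex.I_sq]
    ring
  have hc' : (c₁:ℂ) + 2*c₂ + 3*c₃ + 2*c₄ = 1 := by exact_mod_cast congrArg (Complex.ofReal) hc
  refine ⟨?_, ?_, ?_, ?_⟩
  · rw [ivExpr, hC, hB, hA]; simp
  · rw [ivExpr, hC, hB, hA]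
    simp only [map_one, mul_one, one_mul]
    linear_combination 4*(c₄:ℂ) * hc'
  · rw [hB]; simp
  · intro h4 h
    apply h4
    rw [hB] at h
    simp only [map_one, mul_one] at h
    have h' : (c₄:ℂ) = 0 := by simpa using h
    exact_mod_cast h'
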